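/- Let H be a finite undirected graph on vertex set V, let P ⊆ V × V be a set of ordered pairs, and let r : V × V → ℕ be the demand function with r(u,v) = 1 if (u,v) ∈ P and r(u,v) = 0 otherwise (so r_max = 1). If H covers f_r, i.e. d_H(X) ≥ f_r(X) for every X ⊆ V, then H has an orientation D that contains a directed path from u to v for every pair (u,v) ∈ P. -/

import Mathlib

/-- `D` is an orientation of the undirected graph `H`: each edge of `H` is assigned
exactly one of its two possible directions. -/
def IsOrientation {V : Type*} (H : SimpleGraph V) (D : V → V → Prop) : Prop :=
  ∀ u v : V, (H.Adj u v ↔ (D u v ∨ D v u)) ∧ ¬ (D u v ∧ D v u)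

/-- `d_H(X)`: the number of edges of `H` with exactly one endpoint in `X`. -/
noncomputable def cutCard {V : Type*} (H : SimpleGraph V) (X : Set V) : ℕ :=
  {e | e ∈ H.edgeSet ∧ ∃ a ∈ X, ∃ b ∉ X, e = s(a, b)}.ncard

/-- The set function `f_r`: `f_r(X) = max {r u v | u ∈ X, v ∉ X} + max {r v u | u ∈ X, v ∉ X}`
(with the convention that the maximum of the empty set is `0`, so `f_r ∅ = f_r V = 0`). -/
noncomputable def frDemand {V : Type*} (r : V → V → ℕ) (X : Set V) : ℕ :=
  sSup {n | ∃ u ∈ X, ∃ v ∉ X, n = r u v} + sSup {n | ∃ u ∈ X, ∃ v ∉ X, n = r v u}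


open Classical

namespace FrankAux

open Relation SimpleGraph

variable {V : Type*}

/-- Step relation of a mixed graph: oriented edges one way, unoriented edges both ways. -/
def SStep (H : SimpleGraph V) (D : V → V → Prop) (x y : V) : Prop :=
  D x y ∨ (H.Adj x y ∧ ¬ D x y ∧ ¬ D y x)

lemma rtg_replace {R R' : V → V → Prop} {a b : V}
    (hsub : ∀ x y, R x y → R' x y ∨ (x = b ∧ y = a))
    (hba : ReflTransGen R' b a) {x y : V} (h : ReflTransGen R x y) :
    ReflTransGen R' x y := by
  induction h with
  | refl => exact .refl
  | tail _ h2 ih =>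
    rcases hsub _ _ h2 with h' | ⟨rfl, rfl⟩
    · exact ih.tail h'
    · exact ih.trans hba

lemma rtg_decompose {R T : V → V → Prop} {a b : V}
    (hT : ∀ x y, R x y → T x y ∨ (x = a ∧ y = b) ∨ (x = b ∧ y = a))
    (hab : ¬ ReflTransGen T a b) (hba : ¬ ReflTransGen T b a)
    {x y : V} (h : ReflTransGen R x y) :
    ReflTransGen T x y ∨ (ReflTransGen T x a ∧ ReflTransGen T b y) ∨
      (ReflTransGen T x b ∧ ReflTransGen T a y) := by
  induction h using ReflTransGen.head_induction_on with
  | refl => exact Or.inl .refl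
  | head h' hrest ih =>
    rcases hT _ _ h' with ht | ⟨rfl, rfl⟩ | ⟨rfl, rfl⟩
    · rcases ih with h1 | ⟨h1, h2⟩ | ⟨h1, h2⟩
      · exact Or.inl (ReflTransGen.head ht h1)
      · exact Or.inr (Or.inl ⟨ReflTransGen.head ht h1, h2⟩)
      · exact Or.inr (Or.inr ⟨ReflTransGen.head ht h1, h2⟩)
    · rcases ih with h1 | ⟨h1, h2⟩ | ⟨h1, h2⟩
      · exact Or.inr (Or.inl ⟨.refl, h1⟩)
      · exact absurd h1 hba
      · exact Or.inl h2
    · rcases ih with h1 | ⟨h1, h2⟩ | ⟨h1, h2⟩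
      · exact Or.inr (Or.inr ⟨.refl, h1⟩)
      · exact Or.inl h2
      · exact absurd h1 hab

lemma walk_rtg {G : SimpleGraph V} {R : V → V → Prop} {u v : V} (p : G.Walk u v) :
    (∀ a b, s(a, b) ∈ p.edges → G.Adj a b → R a b) → ReflTransGen R u v := by
  induction p with
  | nil => intro _; exact .refl
  | cons h q ih =>
    intro hyp
    exact ReflTransGen.head (hyp _ _ (by simp) h)
      (ih fun a b hm hadj => hyp a b (by simp [hm]) hadj)

lemma walk_decomp {G : SimpleGraph V} {u v : V} (p : G.Walk u v) :
    p.edges.Nodup → ∀ {c d : V}, s(c, d) ∈ p.edges →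
      ((G.deleteEdges {s(c, d)}).Reachable u c ∧ (G.deleteEdges {s(c, d)}).Reachable d v) ∨
      ((G.deleteEdges {s(c, d)}).Reachable u d ∧ (G.deleteEdges {s(c, d)}).Reachable c v) := by
  induction p with
  | nil => intro _ c d hm; simp at hm
  | @cons u w v h q ih =>
    intro hnd c d hm
    rw [SimpleGraph.Walk.edges_cons, List.nodup_cons] at hnd
    rw [SimpleGraph.Walk.edges_cons, List.mem_cons] at hm
    rcases hm with he | hm
    · have hq : (G.deleteEdges {s(c, d)}).Reachable w v := by
        refine ⟨q.toDeleteEdges _ fun e hee => ?_⟩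
        simp only [Set.mem_singleton_iff]
        rintro rfl
        rw [he] at hee
        exact hnd.1 hee
      rcases Sym2.eq_iff.mp he.symm with ⟨hc, hd⟩ | ⟨hc, hd⟩
      · subst hc; subst hd; exact Or.inl ⟨Reachable.refl _, hq⟩
      · subst hc; subst hd; exact Or.inr ⟨Reachable.refl _, hq⟩
    · have hne : s(u, w) ≠ s(c, d) := fun hh => hnd.1 (hh ▸ hm)
      have hadj : (G.deleteEdges {s(c, d)}).Adj u w := by
        rw [SimpleGraph.deleteEdges_adj]
        exact ⟨h, by simpa using hne⟩
      rcases ih hnd.2 hm with ⟨h1, h2⟩ | ⟨h1, h2⟩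
      · exact Or.inl ⟨hadj.reachable.trans h1, h2⟩
      · exact Or.inr ⟨hadj.reachable.trans h1, h2⟩

lemma nonbridge_of_mem_avoid_walk {H : SimpleGraph V} {x y : V} (hadj : H.Adj x y)
    (p : (H.deleteEdges {s(x, y)}).Walk x y) (hnd : p.edges.Nodup)
    {f : Sym2 V} (hf : f ∈ p.edges) : ¬ H.IsBridge f := by
  induction f using Sym2.ind with
  | _ c d =>
    intro hbr
    have hfe := p.edges_subset_edgeSet hf
    rw [SimpleGraph.edgeSet_deleteEdges] at hfe
    have hne : s(c, d) ≠ s(x, y) := by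
      intro hh
      exact hfe.2 (hh ▸ rfl)
    have hle : (H.deleteEdges {s(x, y)}).deleteEdges {s(c, d)} ≤ H.deleteEdges {s(c, d)} := by
      intro a b hab
      simp only [SimpleGraph.deleteEdges_adj] at hab ⊢
      exact ⟨hab.1.1, hab.2⟩
    have hadjxy : (H.deleteEdges {s(c, d)}).Adj x y := by
      rw [SimpleGraph.deleteEdges_adj]
      refine ⟨hadj, ?_⟩
      simp only [Set.mem_singleton_iff]
      exact fun hh => hne hh.symm
    have hreach : (H.deleteEdges {s(c, d)}).Reachable c d := by
      rcases walk_decomp p hnd hf with ⟨h1, h2⟩ | ⟨h1, h2⟩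
      · exact ((h1.mono hle).symm.trans hadjxy.reachable).trans (h2.mono hle).symm
      · exact ((h2.mono hle).trans hadjxy.symm.reachable).trans (h1.mono hle)
    exact (SimpleGraph.isBridge_iff.mp hbr) hreach

/-- The demand direction across a bridge. -/
def Bdir (H : SimpleGraph V) (P : Set (V × V)) (x y : V) : Prop :=
  ∃ p ∈ P, (H.deleteEdges {s(x, y)}).Reachable x p.1 ∧ (H.deleteEdges {s(x, y)}).Reachable y p.2

/-- Initial (bridge-only) orientation. -/
def D0 (H : SimpleGraph V) (P : Set (V × V)) (x y : V) : Prop :=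
  H.Adj x y ∧ H.IsBridge s(x, y) ∧
    (Bdir H P x y ∨ (¬ Bdir H P x y ∧ ¬ Bdir H P y x ∧ WellOrderingRel x y))

/-- The invariant maintained while orienting edges. -/
def Inv (H : SimpleGraph V) (P : Set (V × V)) (D : V → V → Prop) : Prop :=
  (∀ x y, D x y → H.Adj x y) ∧
  (∀ x y, ¬ (D x y ∧ D y x)) ∧
  (∀ x y, D0 H P x y → D x y) ∧
  (∀ x y, H.Adj x y → ¬ H.IsBridge s(x, y) → ReflTransGen (SStep H D) x y)

section Demand

variable (H : SimpleGraph V) (P : Set (V × V))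

lemma reach_of_demand
    (hcov : ∀ X : Set V, frDemand (fun u v => if (u, v) ∈ P then 1 else 0) X ≤ cutCard H X)
    {u v : V} (hP : (u, v) ∈ P) : H.Reachable u v := by
  by_contra hne
  set X : Set V := {z | H.Reachable u z} with hXdef
  have hcut : cutCard H X = 0 := by
    rw [cutCard]
    convert Set.ncard_empty (Sym2 V) using 2
    ext e
    simp only [Set.mem_setOf_eq, Set.mem_empty_iff_false, iff_false]
    rintro ⟨he, a, ha, b, hb, rfl⟩
    exact hb (ha.trans ((SimpleGraph.mem_edgeSet _).mp he).reachable)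
  have hmem : (1 : ℕ) ∈ {n | ∃ u' ∈ X, ∃ v' ∉ X, n = if (u', v') ∈ P then 1 else 0} :=
    ⟨u, Reachable.refl u, v, hne, by simp [hP]⟩
  have hs1 : 1 ≤ sSup {n | ∃ u' ∈ X, ∃ v' ∉ X, n = if (u', v') ∈ P then 1 else 0} := by
    refine le_csSup ⟨1, ?_⟩ hmem
    rintro n ⟨u', _, v', _, rfl⟩
    split_ifs <;> simp
  have := hcov X
  rw [hcut, frDemand] at this
  omega

lemma bdir_not_both
    (hcov : ∀ X : Set V, frDemand (fun u v => if (u, v) ∈ P then 1 else 0) X ≤ cutCard H X)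
    {x y : V} (hadj : H.Adj x y) (hbr : H.IsBridge s(x, y)) :
    ¬ (Bdir H P x y ∧ Bdir H P y x) := by
  rintro ⟨⟨p, hp, hxp, hyp⟩, ⟨q, hq, hyq, hxq⟩⟩
  rw [show s(y, x) = s(x, y) from Sym2.eq_swap] at hyq hxq
  set X : Set V := {z | (H.deleteEdges {s(x, y)}).Reachable x z} with hXdef
  have hyX : y ∉ X := (SimpleGraph.isBridge_iff.mp hbr)
  have hcut : cutCard H X = 1 := by
    rw [cutCard]
    have : {e | e ∈ H.edgeSet ∧ ∃ a ∈ X, ∃ b ∉ X, e = s(a, b)} = {s(x, y)} := by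
      ext e
      simp only [Set.mem_setOf_eq, Set.mem_singleton_iff]
      constructor
      · rintro ⟨he, a, ha, b, hb, rfl⟩
        by_contra hne
        have hadj' : (H.deleteEdges {s(x, y)}).Adj a b := by
          rw [SimpleGraph.deleteEdges_adj]
          exact ⟨(SimpleGraph.mem_edgeSet _).mp he, by simpa using hne⟩
        exact hb (ha.trans hadj'.reachable)
      · rintro rfl
        exact ⟨(SimpleGraph.mem_edgeSet _).mpr hadj, x, Reachable.refl x, y, hyX, rfl⟩
    rw [this, Set.ncard_singleton]
  have hp1X : p.1 ∈ X := hxp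
  have hp2X : p.2 ∉ X := fun hmem => hyX (hmem.trans hyp.symm)
  have hq1X : q.1 ∉ X := fun hmem => hyX (hmem.trans hyq.symm)
  have hq2X : q.2 ∈ X := hxq
  have hs1 : 1 ≤ sSup {n | ∃ u' ∈ X, ∃ v' ∉ X, n = if (u', v') ∈ P then 1 else 0} := by
    refine le_csSup ⟨1, ?_⟩ ⟨p.1, hp1X, p.2, hp2X, by simp [hp]⟩
    rintro n ⟨u', _, v', _, rfl⟩
    split_ifs <;> simp
  have hs2 : 1 ≤ sSup {n | ∃ u' ∈ X, ∃ v' ∉ X, n = if (v', u') ∈ P then 1 else 0} := by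
    refine le_csSup ⟨1, ?_⟩ ⟨q.2, hq2X, q.1, hq1X, by simp [hq]⟩
    rintro n ⟨u', _, v', _, rfl⟩
    split_ifs <;> simp
  have := hcov X
  rw [hcut, frDemand] at this
  omega

end Demand

section Orient

variable (H : SimpleGraph V) (P : Set (V × V))

lemma d0_total {x y : V} (hadj : H.Adj x y) (hbr : H.IsBridge s(x, y)) :
    D0 H P x y ∨ D0 H P y x := by
  have hbr' : H.IsBridge s(y, x) := by rwa [Sym2.eq_swap]
  by_cases h1 : Bdir H P x y
  · exact Or.inl ⟨hadj, hbr, Or.inl h1⟩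
  by_cases h2 : Bdir H P y x
  · exact Or.inr ⟨hadj.symm, hbr', Or.inl h2⟩
  rcases trichotomous_of WellOrderingRel x y with h | h | h
  · exact Or.inl ⟨hadj, hbr, Or.inr ⟨h1, h2, h⟩⟩
  · exact absurd h hadj.ne
  · exact Or.inr ⟨hadj.symm, hbr', Or.inr ⟨h2, h1, h⟩⟩

lemma d0_asymm
    (hcov : ∀ X : Set V, frDemand (fun u v => if (u, v) ∈ P then 1 else 0) X ≤ cutCard H X)
    (x y : V) : ¬ (D0 H P x y ∧ D0 H P y x) := by
  rintro ⟨⟨ha, hb, h1⟩, ⟨ha', hb', h2⟩⟩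
  have hnb := bdir_not_both H P hcov ha hb
  rcases h1 with h1 | ⟨n1, n2, w1⟩ <;> rcases h2 with h2 | ⟨n3, n4, w2⟩
  · exact hnb ⟨h1, h2⟩
  · exact n4 h1
  · exact n2 h2
  · exact WellOrderingRel.isWellOrder.wf.asymmetric x y w1 w2

lemma inv_d0
    (hcov : ∀ X : Set V, frDemand (fun u v => if (u, v) ∈ P then 1 else 0) X ≤ cutCard H X) :
    Inv H P (D0 H P) := by
  refine ⟨fun x y h => h.1, d0_asymm H P hcov, fun _ _ h => h, ?_⟩
  intro x y hadj hnb
  have hre : (H.deleteEdges {s(x, y)}).Reachable x y := by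
    rw [SimpleGraph.isBridge_iff] at hnb
    push_neg at hnb
    exact hnb
  obtain ⟨w⟩ := hre
  have hnd : (w.toPath : (H.deleteEdges {s(x, y)}).Walk x y).edges.Nodup :=
    w.toPath.2.isTrail.edges_nodup
  refine walk_rtg (w.toPath : (H.deleteEdges {s(x, y)}).Walk x y) ?_
  intro a b hm hab
  have hnbf := nonbridge_of_mem_avoid_walk hadj _ hnd hm
  have hnbf' : ¬ H.IsBridge s(b, a) := by rwa [Sym2.eq_swap]
  have hadj' : H.Adj a b := ((SimpleGraph.deleteEdges_adj).mp hab).1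
  exact (Or.inr ⟨hadj', fun hD => hnbf hD.2.1, fun hD => hnbf' hD.2.1⟩ : SStep H (D0 H P) a b)

lemma orient_helper {D : V → V → Prop} (hInv : Inv H P D) {a b : V}
    (hadj : H.Adj a b) (hDa : ¬ D a b) (hDb : ¬ D b a)
    (hrt : ReflTransGen
      (fun x y => SStep H D x y ∧ ¬(x = a ∧ y = b) ∧ ¬(x = b ∧ y = a)) b a) :
    ∃ D' : V → V → Prop, Inv H P D' ∧ (∀ x y, D x y → D' x y) ∧ D' a b ∧
      (∀ x y, D' x y → D x y ∨ (x = a ∧ y = b)) := by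
  obtain ⟨h1, h2, h3, h5⟩ := hInv
  set D' : V → V → Prop := fun x y => D x y ∨ (x = a ∧ y = b) with hD'def
  have hsub : ∀ x y, SStep H D x y → SStep H D' x y ∨ (x = b ∧ y = a) := by
    intro x y h
    by_cases hba : x = b ∧ y = a
    · exact Or.inr hba
    refine Or.inl ?_
    rcases h with h | ⟨hxy, nxy, nyx⟩
    · exact Or.inl (Or.inl h)
    by_cases hab' : x = a ∧ y = b
    · exact Or.inl (Or.inr hab')
    refine Or.inr ⟨hxy, ?_, ?_⟩
    · rintro (h | h)
      exacts [nxy h, hab' h]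
    · rintro (h | ⟨hy, hx⟩)
      exacts [nyx h, hba ⟨hx, hy⟩]
  have hTsub : ∀ x y,
      (SStep H D x y ∧ ¬(x = a ∧ y = b) ∧ ¬(x = b ∧ y = a)) → SStep H D' x y := by
    intro x y ⟨h, _, hb2⟩
    rcases hsub x y h with h' | h'
    exacts [h', absurd h' hb2]
  have hba' : ReflTransGen (SStep H D') b a := ReflTransGen.mono (show ∀ x y, _ → SStep H D' x y from fun x y h => hTsub x y h) b a hrt
  refine ⟨D', ⟨?_, ?_, ?_, ?_⟩, fun x y h => Or.inl h, Or.inr ⟨rfl, rfl⟩, fun x y h => h⟩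
  · rintro x y (h | ⟨rfl, rfl⟩)
    exacts [h1 x y h, hadj]
  · rintro x y ⟨h | ⟨rfl, rfl⟩, h' | ⟨hy, hx⟩⟩
    · exact h2 x y ⟨h, h'⟩
    · subst hy; subst hx; exact hDb h
    · exact hDb h'
    · subst hx; exact hadj.ne (hy.symm)
  · exact fun x y hh => Or.inl (h3 x y hh)
  · intro x y hxy hnb
    exact rtg_replace hsub hba' (h5 x y hxy hnb)

lemma orient_step {D : V → V → Prop} (hInv : Inv H P D) {a b : V}
    (hadj : H.Adj a b) (hnb : ¬ H.IsBridge s(a, b)) (hDa : ¬ D a b) (hDb : ¬ D b a) :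
    ∃ D' : V → V → Prop, Inv H P D' ∧ (∀ x y, D x y → D' x y) ∧ (D' a b ∨ D' b a) ∧
      (∀ x y, D' x y → D x y ∨ (x = a ∧ y = b) ∨ (x = b ∧ y = a)) := by
  obtain ⟨h1, h2, h3, h5⟩ := hInv
  set T : V → V → Prop :=
    fun x y => SStep H D x y ∧ ¬(x = a ∧ y = b) ∧ ¬(x = b ∧ y = a) with hTdef
  have hT : ∀ x y, SStep H D x y → T x y ∨ (x = a ∧ y = b) ∨ (x = b ∧ y = a) := by
    intro x y h
    by_cases h1' : x = a ∧ y = b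
    · exact Or.inr (Or.inl h1')
    by_cases h2' : x = b ∧ y = a
    · exact Or.inr (Or.inr h2')
    · exact Or.inl ⟨h, h1', h2'⟩
  have key : ReflTransGen T a b ∨ ReflTransGen T b a := by
    by_contra hk
    push_neg at hk
    obtain ⟨hab, hba⟩ := hk
    have hre : (H.deleteEdges {s(a, b)}).Reachable a b := by
      rw [SimpleGraph.isBridge_iff] at hnb
      push_neg at hnb
      exact hnb
    obtain ⟨w⟩ := hre
    have hnd : (w.toPath : (H.deleteEdges {s(a, b)}).Walk a b).edges.Nodup :=
      w.toPath.2.isTrail.edges_nodup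
    have claim : ∀ {z v' : V} (q : (H.deleteEdges {s(a, b)}).Walk z v'),
        (∀ f ∈ q.edges, ¬ H.IsBridge f) → ReflTransGen T v' b → ReflTransGen T z b := by
      intro z v' q
      induction q with
      | nil => exact fun _ h => h
      | @cons z w' v' h q ih =>
        intro hq hvb
        have hzw_nb : ¬ H.IsBridge s(z, w') := hq _ (by simp)
        have hadjzw : H.Adj z w' := ((SimpleGraph.deleteEdges_adj).mp h).1
        have hnee : s(z, w') ≠ s(a, b) := by
          intro hh
          exact ((SimpleGraph.deleteEdges_adj).mp h).2 (hh ▸ rfl)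
        have hpair1 : ¬ (z = a ∧ w' = b) := fun ⟨hz, hw⟩ => hnee (by rw [hz, hw])
        have hpair2 : ¬ (z = b ∧ w' = a) := fun ⟨hz, hw⟩ =>
          hnee (by rw [hz, hw, Sym2.eq_swap])
        have tail := ih (fun f hf => hq f (by simp [hf])) hvb
        by_cases hs : SStep H D z w'
        · exact ReflTransGen.head ⟨hs, hpair1, hpair2⟩ tail
        · have hDwz : D w' z := by
            by_cases hD : D w' z
            · exact hD
            · exact absurd
                (Or.inr ⟨hadjzw, fun h' => hs (Or.inl h'), hD⟩ : SStep H D z w') hs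
          have hTwz : T w' z := by
            refine ⟨Or.inl hDwz, ?_, ?_⟩
            · rintro ⟨hw, hz⟩
              exact hnee (by rw [hz, hw, Sym2.eq_swap])
            · rintro ⟨hw, hz⟩
              exact hnee (by rw [hz, hw])
          rcases rtg_decompose hT hab hba (h5 z w' hadjzw hzw_nb)
            with h' | ⟨hza, hbw⟩ | ⟨hzb, _⟩
          · exact h'.trans tail
          · exact absurd ((ReflTransGen.tail hbw hTwz).trans hza) hba
          · exact hzb
    exact hab (claim (w.toPath : (H.deleteEdges {s(a, b)}).Walk a b)
      (fun f hf => nonbridge_of_mem_avoid_walk hadj _ hnd hf) .refl)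
  rcases key with hk | hk
  · have hrt' : ReflTransGen
        (fun x y => SStep H D x y ∧ ¬(x = b ∧ y = a) ∧ ¬(x = a ∧ y = b)) a b :=
      ReflTransGen.mono (show ∀ x y, T x y → SStep H D x y ∧ ¬(x = b ∧ y = a) ∧ ¬(x = a ∧ y = b) from
        fun x y ⟨u1, u2, u3⟩ => ⟨u1, u3, u2⟩) a b hk
    obtain ⟨D', hI, hsubD, hD', hback⟩ :=
      orient_helper H P ⟨h1, h2, h3, h5⟩ hadj.symm hDb hDa hrt'
    exact ⟨D', hI, hsubD, Or.inr hD', fun x y h => (hback x y h).imp id Or.inr⟩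
  · obtain ⟨D', hI, hsubD, hD', hback⟩ :=
      orient_helper H P ⟨h1, h2, h3, h5⟩ hadj hDa hDb hk
    exact ⟨D', hI, hsubD, Or.inl hD', fun x y h => (hback x y h).imp id Or.inl⟩

lemma orient_all [Fintype V]
    (hcov : ∀ X : Set V, frDemand (fun u v => if (u, v) ∈ P then 1 else 0) X ≤ cutCard H X) :
    ∀ (n : ℕ) (D : V → V → Prop), Inv H P D →
      {p : V × V | H.Adj p.1 p.2 ∧ ¬ D p.1 p.2 ∧ ¬ D p.2 p.1}.ncard ≤ n →
      ∃ D' : V → V → Prop, Inv H P D' ∧ (∀ x y, D' x y → D x y ∨ ¬ D x y) ∧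
        (∀ x y, D x y → D' x y) ∧ (∀ x y, H.Adj x y → D' x y ∨ D' y x) := by
  intro n
  induction n with
  | zero =>
    intro D hInv hc
    refine ⟨D, hInv, fun _ _ _ => Classical.em _ |>.imp id id |>.elim Or.inl Or.inr, fun _ _ h => h, ?_⟩
    intro x y hadj
    by_contra hcon
    push_neg at hcon
    have hmem : (x, y) ∈ {p : V × V | H.Adj p.1 p.2 ∧ ¬ D p.1 p.2 ∧ ¬ D p.2 p.1} :=
      ⟨hadj, hcon.1, hcon.2⟩
    have hempty : {p : V × V | H.Adj p.1 p.2 ∧ ¬ D p.1 p.2 ∧ ¬ D p.2 p.1} = ∅ :=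
      (Set.ncard_eq_zero (Set.toFinite _)).mp (Nat.le_zero.mp hc)
    rw [hempty] at hmem
    exact hmem
  | succ n ih =>
    intro D hInv hc
    by_cases hall : ∀ x y, H.Adj x y → D x y ∨ D y x
    · exact ⟨D, hInv, fun _ _ _ => Classical.em _ |>.imp id id |>.elim Or.inl Or.inr, fun _ _ h => h, hall⟩
    push_neg at hall
    obtain ⟨a, b, hadj, hDa, hDb⟩ := hall
    have hnb : ¬ H.IsBridge s(a, b) := by
      intro hbr
      rcases d0_total H P hadj hbr with h | h
      exacts [hDa (hInv.2.2.1 a b h), hDb (hInv.2.2.1 b a h)]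
    obtain ⟨D', hI', hsubD, hor, hback⟩ := orient_step H P hInv hadj hnb hDa hDb
    have hmem : (a, b) ∈ {p : V × V | H.Adj p.1 p.2 ∧ ¬ D p.1 p.2 ∧ ¬ D p.2 p.1} :=
      ⟨hadj, hDa, hDb⟩
    have hsubset : {p : V × V | H.Adj p.1 p.2 ∧ ¬ D' p.1 p.2 ∧ ¬ D' p.2 p.1} ⊆
        {p : V × V | H.Adj p.1 p.2 ∧ ¬ D p.1 p.2 ∧ ¬ D p.2 p.1} \ {(a, b)} := by
      rintro ⟨x, y⟩ ⟨hxy, n1, n2⟩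
      refine ⟨⟨hxy, fun h => n1 (hsubD _ _ h), fun h => n2 (hsubD _ _ h)⟩, ?_⟩
      simp only [Set.mem_singleton_iff, Prod.mk.injEq]
      rintro ⟨rfl, rfl⟩
      rcases hor with h' | h'
      exacts [n1 h', n2 h']
    have hlt : {p : V × V | H.Adj p.1 p.2 ∧ ¬ D' p.1 p.2 ∧ ¬ D' p.2 p.1}.ncard ≤ n := by
      have h1' := Set.ncard_le_ncard hsubset (Set.toFinite _)
      have h2' := Set.ncard_diff_singleton_lt_of_mem hmem (Set.toFinite _)
      omega
    obtain ⟨D'', hI'', _, hsubD', htot⟩ := ih D' hI' hlt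
    exact ⟨D'', hI'', fun _ _ _ => Classical.em _ |>.imp id id |>.elim Or.inl Or.inr,
      fun x y h => hsubD' x y (hsubD x y h), htot⟩

end Orient

end FrankAux

/-- With `r(u,v) = 1` if `(u,v) ∈ P` and `0` otherwise, if `H` covers `f_r`
then `H` has an orientation `D` containing a directed `u→v` path for every `(u,v) ∈ P`. -/
theorem covers_fr_implies_orientable
    {V : Type*} [Fintype V] (H : SimpleGraph V) (P : Set (V × V))
    (hcov : ∀ X : Set V,
      frDemand (fun u v => if (u, v) ∈ P then 1 else 0) X ≤ cutCard H X) :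
    ∃ D : V → V → Prop, IsOrientation H D ∧
      ∀ p ∈ P, Relation.ReflTransGen D p.1 p.2 := by
  classical
  open FrankAux Relation SimpleGraph in
  obtain ⟨D, hInv, _, h3', htotal⟩ :=
    FrankAux.orient_all H P hcov
      {p : V × V | H.Adj p.1 p.2 ∧ ¬ FrankAux.D0 H P p.1 p.2 ∧ ¬ FrankAux.D0 H P p.2 p.1}.ncard
      (FrankAux.D0 H P) (FrankAux.inv_d0 H P hcov) le_rfl
  obtain ⟨h1, h2, h3, h5⟩ := hInv
  -- mutual reachability across non-bridge edges, in `D` itself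
  have hreachD : ∀ x y, H.Adj x y → ¬ H.IsBridge s(x, y) → Relation.ReflTransGen D x y := by
    intro x y hadj hnb
    refine Relation.ReflTransGen.mono (show ∀ p q, SStep H D p q → D p q from ?_) x y (h5 x y hadj hnb)
    rintro p q (h | ⟨hadj', n1, n2⟩)
    · exact h
    · rcases htotal p q hadj' with h' | h'
      exacts [h', absurd h' n2]
  -- main reachability lemma, by induction on a path
  have final : ∀ {u v : V} (p : H.Walk u v), p.IsPath →
      (∀ x y, H.Adj x y → H.IsBridge s(x, y) →
        (H.deleteEdges {s(x, y)}).Reachable x u →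
        (H.deleteEdges {s(x, y)}).Reachable y v → D x y) →
      Relation.ReflTransGen D u v := by
    intro u v p
    induction p with
    | nil => exact fun _ _ => .refl
    | @cons u w v h q ih =>
      intro hp hQ
      rw [SimpleGraph.Walk.cons_isPath_iff] at hp
      by_cases hbr : H.IsBridge s(u, w)
      · have hwv : (H.deleteEdges {s(u, w)}).Reachable w v := by
          by_cases hin : s(u, w) ∈ q.edges
          · exact absurd (q.fst_mem_support_of_mem_edges hin) hp.2
          · refine ⟨q.toDeleteEdges _ fun e he => ?_⟩
            simp only [Set.mem_singleton_iff]
            rintro rfl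
            exact hin he
        have hDuw : D u w := hQ u w h hbr (SimpleGraph.Reachable.refl u) hwv
        refine Relation.ReflTransGen.head hDuw (ih hp.1 ?_)
        intro x y hadj' hbr' hxw hyv
        by_cases he : s(u, w) = s(x, y)
        · rcases Sym2.eq_iff.mp he with ⟨hux, hwy⟩ | ⟨huy, hwx⟩
          · subst hux; subst hwy; exact hDuw
          · exfalso
            subst huy; subst hwx
            rw [show s(w, u) = s(u, w) from Sym2.eq_swap] at hyv
            exact (SimpleGraph.isBridge_iff.mp hbr) (hyv.trans hwv.symm)
        · have hadjw : (H.deleteEdges {s(x, y)}).Adj w u := by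
            rw [SimpleGraph.deleteEdges_adj]
            refine ⟨h.symm, ?_⟩
            simp only [Set.mem_singleton_iff]
            intro hh
            exact he ((Sym2.eq_swap).trans hh)
          exact hQ x y hadj' hbr' (hxw.trans hadjw.reachable) hyv
      · refine (hreachD u w h hbr).trans (ih hp.1 ?_)
        intro x y hadj' hbr' hxw hyv
        have hne : s(u, w) ≠ s(x, y) := fun hh => hbr (hh ▸ hbr')
        have hadjw : (H.deleteEdges {s(x, y)}).Adj w u := by
          rw [SimpleGraph.deleteEdges_adj]
          refine ⟨h.symm, ?_⟩
          simp only [Set.mem_singleton_iff]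
          intro hh
          exact hne ((Sym2.eq_swap).trans hh)
        exact hQ x y hadj' hbr' (hxw.trans hadjw.reachable) hyv
  refine ⟨D, ?_, ?_⟩
  · intro u v
    refine ⟨⟨fun hadj => htotal u v hadj, ?_⟩, h2 u v⟩
    rintro (h | h)
    exacts [h1 u v h, (h1 v u h).symm]
  · rintro ⟨u, v⟩ hP
    obtain ⟨w⟩ := FrankAux.reach_of_demand H P hcov hP
    refine final (w.toPath : H.Walk u v) w.toPath.2 ?_
    intro x y hadj hbr hxu hyv
    exact h3 x y ⟨hadj, hbr, Or.inl ⟨(u, v), hP, hxu, hyv⟩⟩
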